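/- If P is a polynomial with non-negative coefficients, homogeneous of degree d, in variables x_{ij} (i=1..k, j=1..n_i), and x is a point of the product of simplices D where all relevant denominators are nonzero, then the Baum–Eagon map T defined by T(x)_{ij} = x_{ij}·(∂P/∂x_{ij}) / Σ_h x_{ih}·(∂P/∂x_{ih}) satisfies P(T(x)) ≥ P(x), with equality only if T(x) = x. -/

import Mathlib

open MvPolynomial

/-- The Baum–Eagon map associated to a multivariate polynomial `P` on a product of
simplices indexed by `Σ i : Fin k, Fin (n i)`:
`T(x)_{ij} = x_{ij} ∂P/∂x_{ij}(x) / ∑_h x_{ih} ∂P/∂x_{ih}(x)`. -/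
noncomputable def baumEagonMap {k : ℕ} {n : Fin k → ℕ}
    (P : MvPolynomial (Σ i : Fin k, Fin (n i)) ℝ)
    (x : (Σ i : Fin k, Fin (n i)) → ℝ) : (Σ i : Fin k, Fin (n i)) → ℝ :=
  fun a => x a * eval x (pderiv a P) /
    ∑ h : Fin (n a.1), x ⟨a.1, h⟩ * eval x (pderiv (⟨a.1, h⟩ : Σ i, Fin (n i)) P)


section BaumEagonAux


theorem keyA' {σ : Type*} [Fintype σ] [DecidableEq σ] (P : MvPolynomial σ ℝ) (x : σ → ℝ) (a : σ) :
    x a * eval x (pderiv a P) =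
      ∑ m ∈ P.support, coeff m P * (∏ b, x b ^ m b) * (m a : ℝ) := by
  conv_lhs => rw [P.as_sum, map_sum, map_sum]
  rw [Finset.mul_sum]
  refine Finset.sum_congr rfl fun m _ => ?_
  rw [pderiv_monomial, eval_monomial, Finsupp.prod_fintype _ _ (fun i => pow_zero _)]
  rcases Nat.eq_zero_or_pos (m a) with h | h
  · simp [h]
  · have h1 : ∀ b, ((m - Finsupp.single a 1 : σ →₀ ℕ)) b = if b = a then m a - 1 else m b := by
      intro b
      rw [Finsupp.tsub_apply]
      by_cases hb : b = a
      · simp [hb]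
      · have : a ≠ b := fun h => hb h.symm
        simp [hb, Finsupp.single_apply, this]
    have h2 : (∏ b, x b ^ ((m - Finsupp.single a 1 : σ →₀ ℕ)) b)
        = x a ^ (m a - 1) * ∏ b ∈ Finset.univ.erase a, x b ^ m b := by
      rw [← Finset.mul_prod_erase Finset.univ _ (Finset.mem_univ a), h1 a, if_pos rfl]
      congr 1
      refine Finset.prod_congr rfl fun b hb => ?_
      rw [h1 b, if_neg (Finset.mem_erase.mp hb).1]
    have h3 : (∏ b, x b ^ m b) = x a ^ m a * ∏ b ∈ Finset.univ.erase a, x b ^ m b :=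
      (Finset.mul_prod_erase Finset.univ _ (Finset.mem_univ a)).symm
    have h4 : x a * x a ^ (m a - 1) = x a ^ m a := by
      rw [← pow_succ']
      congr 1
      omega
    rw [h2, h3, ← h4]
    ring



theorem gibbs' {N : ℕ} (p q : Fin N → ℝ) (hp : ∀ j, 0 ≤ p j) (hq : ∀ j, 0 ≤ q j)
    (hp1 : ∑ j, p j = 1) (hq1 : ∑ j, q j = 1) (habs : ∀ j, p j ≠ 0 → 0 < q j) :
    0 ≤ ∑ j, p j * (Real.log (p j) - Real.log (q j)) ∧
      ((∑ j, p j * (Real.log (p j) - Real.log (q j))) = 0 → p = q) := by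
  classical
  set t : Finset (Fin N) := Finset.univ.filter (fun j => p j ≠ 0) with ht
  have hmem : ∀ j, j ∈ t ↔ p j ≠ 0 := by
    intro j; simp [ht]
  have hzero : ∀ j, j ∉ t → p j = 0 := fun j hj => by_contra fun h => hj ((hmem j).mpr h)
  have hsum : ∑ j, p j * (Real.log (p j) - Real.log (q j))
      = ∑ j ∈ t, p j * (Real.log (p j) - Real.log (q j)) := by
    refine (Finset.sum_subset (Finset.subset_univ t) ?_).symm
    intro j _ hj
    rw [hzero j hj, zero_mul]
  have hpt : ∀ j ∈ t, 0 < p j := fun j hj => lt_of_le_of_ne (hp j) (Ne.symm ((hmem j).mp hj))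
  have hqt : ∀ j ∈ t, 0 < q j := fun j hj => habs j ((hmem j).mp hj)
  have hterm : ∀ j ∈ t, p j - q j ≤ p j * (Real.log (p j) - Real.log (q j)) := by
    intro j hj
    have h1 : Real.log (q j / p j) ≤ q j / p j - 1 :=
      Real.log_le_sub_one_of_pos (div_pos (hqt j hj) (hpt j hj))
    have h2 : Real.log (q j / p j) = Real.log (q j) - Real.log (p j) :=
      Real.log_div (ne_of_gt (hqt j hj)) (ne_of_gt (hpt j hj))
    have h3 : p j * (q j / p j - 1) = q j - p j := by
      rw [mul_sub, mul_div_cancel₀ _ (ne_of_gt (hpt j hj)), mul_one]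
    nlinarith [hpt j hj, h1, h2, h3]
  have hqle : ∑ j ∈ t, q j ≤ 1 := by
    rw [← hq1]
    exact Finset.sum_le_sum_of_subset_of_nonneg (Finset.subset_univ t) (fun j _ _ => hq j)
  have hpt1 : ∑ j ∈ t, p j = 1 := by
    rw [← hp1]
    refine Finset.sum_subset (Finset.subset_univ t) ?_
    intro j _ hj
    exact hzero j hj
  have hlow : 0 ≤ ∑ j ∈ t, (p j - q j) := by
    rw [Finset.sum_sub_distrib, hpt1]
    linarith
  have hmain : 0 ≤ ∑ j, p j * (Real.log (p j) - Real.log (q j)) := by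
    rw [hsum]
    calc (0:ℝ) ≤ ∑ j ∈ t, (p j - q j) := hlow
    _ ≤ ∑ j ∈ t, p j * (Real.log (p j) - Real.log (q j)) := Finset.sum_le_sum hterm
  refine ⟨hmain, fun heq => ?_⟩
  -- equality case
  rw [hsum] at heq
  have h5 : ∑ j ∈ t, (p j - q j) = 0 := le_antisymm (by
      calc ∑ j ∈ t, (p j - q j) ≤ ∑ j ∈ t, p j * (Real.log (p j) - Real.log (q j)) :=
        Finset.sum_le_sum hterm
      _ = 0 := heq) hlow
  have h6 : ∑ j ∈ t, (p j * (Real.log (p j) - Real.log (q j)) - (p j - q j)) = 0 := by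
    rw [Finset.sum_sub_distrib, heq, h5, sub_zero]
  have h7 : ∀ j ∈ t, p j * (Real.log (p j) - Real.log (q j)) - (p j - q j) = 0 :=
    (Finset.sum_eq_zero_iff_of_nonneg (fun j hj => by linarith [hterm j hj])).mp h6
  have heqt : ∀ j ∈ t, p j = q j := by
    intro j hj
    by_contra hne
    have hr : q j / p j ≠ 1 := by
      intro h
      exact hne ((div_eq_one_iff_eq (ne_of_gt (hpt j hj))).mp h).symm
    have h1 : Real.log (q j / p j) < q j / p j - 1 :=
      Real.log_lt_sub_one_of_pos (div_pos (hqt j hj) (hpt j hj)) hr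
    have h2 : Real.log (q j / p j) = Real.log (q j) - Real.log (p j) :=
      Real.log_div (ne_of_gt (hqt j hj)) (ne_of_gt (hpt j hj))
    have h3 : p j * (q j / p j - 1) = q j - p j := by
      rw [mul_sub, mul_div_cancel₀ _ (ne_of_gt (hpt j hj)), mul_one]
    have h4 := h7 j hj
    nlinarith [hpt j hj]
  have hqt1 : ∑ j ∈ t, q j = 1 := by
    have := Finset.sum_sub_distrib (s := t) (f := p) (g := q)
    rw [h5, hpt1] at this  -- 0 = 1 - ∑ q
    linarith
  have hqzero : ∀ j, j ∉ t → q j = 0 := by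
    intro j hj
    have hcompl : ∑ j ∈ tᶜ, q j = 0 := by
      have := Finset.sum_add_sum_compl t q
      rw [hqt1, hq1] at this
      linarith
    have := (Finset.sum_eq_zero_iff_of_nonneg (fun i _ => hq i)).mp hcompl
    exact this j (Finset.mem_compl.mpr hj)
  funext j
  by_cases hj : j ∈ t
  · exact heqt j hj
  · rw [hzero j hj, hqzero j hj]

end BaumEagonAux

/-- **Baum–Eagon inequality.** If `P` is a polynomial with non-negative coefficients,
homogeneous of degree `d`, in variables `x i j` (`i : Fin k`, `j : Fin (n i)`), and `x`
is a point of the product of simplices `D` where all denominators are positive, then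
the Baum–Eagon map `T` satisfies `P (T x) ≥ P x`, with equality only if `T x = x`. -/
theorem baum_eagon_inequality (k : ℕ) (n : Fin k → ℕ) (d : ℕ)
    (P : MvPolynomial (Σ i : Fin k, Fin (n i)) ℝ)
    (hcoeff : ∀ m, 0 ≤ P.coeff m)
    (hhom : P.IsHomogeneous d)
    (x : (Σ i : Fin k, Fin (n i)) → ℝ)
    (hx0 : ∀ a, 0 ≤ x a)
    (hx1 : ∀ i : Fin k, ∑ j : Fin (n i), x ⟨i, j⟩ = 1)
    (hden : ∀ i : Fin k,
      0 < ∑ h : Fin (n i), x ⟨i, h⟩ * eval x (pderiv (⟨i, h⟩ : Σ i, Fin (n i)) P)) :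
    eval x P ≤ eval (baumEagonMap P x) P ∧
      (eval (baumEagonMap P x) P = eval x P → baumEagonMap P x = x) := by
  classical
  by_cases hk0 : k = 0
  · subst hk0
    have hTx : baumEagonMap P x = x := funext fun a => a.1.elim0
    exact ⟨le_of_eq (by rw [hTx]), fun _ => hTx⟩
  have hk : 0 < k := Nat.pos_of_ne_zero hk0
  set T : (Σ i : Fin k, Fin (n i)) → ℝ := baumEagonMap P x with hTdef
  set W : ((Σ i : Fin k, Fin (n i)) →₀ ℕ) → ℝ := fun m => coeff m P * ∏ b, x b ^ m b with hWdef
  have hW0 : ∀ m, 0 ≤ W m := fun m =>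
    mul_nonneg (hcoeff m) (Finset.prod_nonneg fun b _ => pow_nonneg (hx0 b) _)
  set A : (Σ i : Fin k, Fin (n i)) → ℝ := fun a => x a * eval x (pderiv a P) with hAdef
  have hA : ∀ a, A a = ∑ m ∈ P.support, W m * (m a : ℝ) := by
    intro a
    simp only [hAdef, hWdef]
    exact keyA' P x a
  have hA0 : ∀ a, 0 ≤ A a := fun a => by
    rw [hA]
    exact Finset.sum_nonneg fun m _ => mul_nonneg (hW0 m) (Nat.cast_nonneg _)
  have hAx : ∀ a, x a = 0 → A a = 0 := by
    intro a ha
    rw [hA]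
    refine Finset.sum_eq_zero fun m _ => ?_
    by_cases hma : m a = 0
    · simp [hma]
    · have hz : (∏ b, x b ^ m b) = 0 :=
        Finset.prod_eq_zero (Finset.mem_univ a) (by rw [ha]; exact zero_pow hma)
      simp [hWdef, hz]
  have hxA : ∀ a, A a ≠ 0 → 0 < x a := fun a h =>
    lt_of_le_of_ne (hx0 a) (fun hh => h (hAx a hh.symm))
  set S : Fin k → ℝ := fun i => ∑ j, A ⟨i, j⟩ with hSdef
  have hS : ∀ i, 0 < S i := by
    intro i
    have := hden i
    simp only [hSdef, hAdef]
    exact this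
  have hT : ∀ a, T a = A a / S a.1 := by
    intro a
    simp only [hTdef, baumEagonMap, hAdef, hSdef]
  have hT0 : ∀ a, 0 ≤ T a := fun a => (hT a) ▸ div_nonneg (hA0 a) (hS a.1).le
  have hTsum : ∀ i, ∑ j, T ⟨i, j⟩ = 1 := by
    intro i
    have : ∀ j : Fin (n i), T ⟨i, j⟩ = A ⟨i, j⟩ / S i := fun j => hT ⟨i, j⟩
    rw [Finset.sum_congr rfl fun j _ => this j, ← Finset.sum_div]
    have hsum : ∑ j, A ⟨i, j⟩ = S i := by simp [hSdef]
    rw [hsum, div_self (hS i).ne']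
  have hPx : eval x P = ∑ m ∈ P.support, W m := by
    rw [eval_eq']
  have hPx0 : 0 ≤ eval x P := hPx ▸ Finset.sum_nonneg fun m _ => hW0 m
  have hdeg : ∀ m ∈ P.support, (∑ b, (m b : ℝ)) = (d : ℝ) := by
    intro m hm
    have h := hhom (mem_support_iff.mp hm)
    rw [show (Finsupp.weight 1 : _ →+ ℕ) = Finsupp.weight (fun _ => 1) from rfl,
      ← Finsupp.degree_eq_weight_one] at h
    have : ∑ b, m b = d := by
      rw [← h, Finsupp.degree]
      exact (Finset.sum_subset (Finset.subset_univ _) (fun b _ hb => by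
        simpa using Finsupp.notMem_support_iff.mp hb)).symm
    rw [← this]
    push_cast
    rfl
  have hEuler : ∑ a, A a = d * eval x P := by
    rw [Finset.sum_congr rfl fun a _ => hA a, Finset.sum_comm, hPx, Finset.mul_sum]
    refine Finset.sum_congr rfl fun m hm => ?_
    rw [← Finset.mul_sum, hdeg m hm, mul_comm]
  have hSsum : ∑ i, S i = ∑ a, A a := by
    simp only [hSdef]
    exact (Finset.sum_sigma Finset.univ (fun _ => Finset.univ) A).symm
  have hSpos : 0 < ∑ i, S i :=
    Finset.sum_pos (fun i _ => hS i) ⟨⟨0, hk⟩, Finset.mem_univ _⟩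
  have hPxpos : 0 < eval x P := by
    have hd : (0 : ℝ) < d * eval x P := by rw [← hEuler, ← hSsum]; exact hSpos
    nlinarith [hPx0, (Nat.cast_nonneg d : (0:ℝ) ≤ (d:ℝ))]
  set s : Finset ((Σ i : Fin k, Fin (n i)) →₀ ℕ) :=
    P.support.filter (fun m => W m ≠ 0) with hsdef
  have hsub : s ⊆ P.support := Finset.filter_subset _ _
  have hWs : ∀ m ∈ s, 0 < W m := fun m hm =>
    lt_of_le_of_ne (hW0 m) (Ne.symm (Finset.mem_filter.mp hm).2)
  have hsumW : ∑ m ∈ s, W m = eval x P := by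
    rw [hsdef, Finset.sum_filter_ne_zero, ← hPx]
  have hxpos : ∀ m ∈ s, ∀ a, m a ≠ 0 → 0 < x a := by
    intro m hm a hma
    have hW' : W m ≠ 0 := (Finset.mem_filter.mp hm).2
    simp only [hWdef] at hW'
    have hprod : (∏ b, x b ^ m b) ≠ 0 := right_ne_zero_of_mul hW'
    have hne := (Finset.prod_ne_zero_iff.mp hprod) a (Finset.mem_univ a)
    refine lt_of_le_of_ne (hx0 a) fun hh => hne ?_
    rw [← hh, zero_pow hma]
  have hApos : ∀ m ∈ s, ∀ a, m a ≠ 0 → 0 < A a := by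
    intro m hm a hma
    rw [hA]
    refine Finset.sum_pos' (fun m' _ => mul_nonneg (hW0 m') (Nat.cast_nonneg _)) ⟨m, hsub hm, ?_⟩
    exact mul_pos (hWs m hm) (by exact_mod_cast Nat.pos_of_ne_zero hma)
  have hTpos : ∀ m ∈ s, ∀ a, m a ≠ 0 → 0 < T a := fun m hm a hma =>
    (hT a) ▸ div_pos (hApos m hm a hma) (hS a.1)
  have hprodT : ∀ m ∈ s, 0 < ∏ b, T b ^ m b := by
    intro m hm
    refine Finset.prod_pos fun b _ => ?_
    by_cases hb : m b = 0
    · rw [hb, pow_zero]; exact one_pos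
    · exact pow_pos (hTpos m hm b hb) _
  have hprodx : ∀ m ∈ s, 0 < ∏ b, x b ^ m b := by
    intro m hm
    refine Finset.prod_pos fun b _ => ?_
    by_cases hb : m b = 0
    · rw [hb, pow_zero]; exact one_pos
    · exact pow_pos (hxpos m hm b hb) _
  set w : ((Σ i : Fin k, Fin (n i)) →₀ ℕ) → ℝ := fun m => W m / eval x P with hwdef
  set y : ((Σ i : Fin k, Fin (n i)) →₀ ℕ) → ℝ :=
    fun m => eval x P * (∏ b, T b ^ m b) / (∏ b, x b ^ m b) with hydef
  have hypos : ∀ m ∈ s, 0 < y m := fun m hm =>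
    div_pos (mul_pos hPxpos (hprodT m hm)) (hprodx m hm)
  have hw0 : ∀ m ∈ s, 0 ≤ w m := fun m hm => div_nonneg (hW0 m) hPxpos.le
  have hw1 : ∑ m ∈ s, w m = 1 := by
    simp only [hwdef]
    rw [← Finset.sum_div, hsumW, div_self hPxpos.ne']
  have hJ : ∑ m ∈ s, w m * Real.log (y m) ≤ Real.log (∑ m ∈ s, w m * y m) := by
    have := (strictConcaveOn_log_Ioi.concaveOn).le_map_sum hw0 hw1
      (fun m hm => Set.mem_Ioi.mpr (hypos m hm))
    simpa [smul_eq_mul] using this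
  have hwy : ∀ m ∈ s, w m * y m = coeff m P * ∏ b, T b ^ m b := by
    intro m hm
    simp only [hwdef, hydef, hWdef]
    have h1 := (hprodx m hm).ne'
    have h2 := hPxpos.ne'
    field_simp
  have hsnonempty : s.Nonempty := by
    rcases Finset.eq_empty_or_nonempty s with h | h
    · rw [h, Finset.sum_empty] at hsumW
      exact absurd hsumW.symm hPxpos.ne'
    · exact h
  have hsum_wy_pos : 0 < ∑ m ∈ s, w m * y m :=
    Finset.sum_pos (fun m hm => mul_pos (div_pos (hWs m hm) hPxpos) (hypos m hm)) hsnonempty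
  have hle_evalT : ∑ m ∈ s, w m * y m ≤ eval T P := by
    rw [Finset.sum_congr rfl hwy, eval_eq']
    refine Finset.sum_le_sum_of_subset_of_nonneg hsub fun m _ _ => ?_
    exact mul_nonneg (hcoeff m) (Finset.prod_nonneg fun b _ => pow_nonneg (hT0 b) _)
  have hevalT_pos : 0 < eval T P := lt_of_lt_of_le hsum_wy_pos hle_evalT
  set L : (Σ i : Fin k, Fin (n i)) → ℝ := fun b => Real.log (T b) - Real.log (x b) with hLdef
  have hlogy : ∀ m ∈ s, Real.log (y m)
      = Real.log (eval x P) + ∑ b, (m b : ℝ) * L b := by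
    intro m hm
    have hTne : ∀ b ∈ Finset.univ, T b ^ m b ≠ 0 := by
      intro b _
      by_cases hb : m b = 0
      · rw [hb, pow_zero]; exact one_ne_zero
      · exact (pow_pos (hTpos m hm b hb) _).ne'
    have hxne : ∀ b ∈ Finset.univ, x b ^ m b ≠ 0 := by
      intro b _
      by_cases hb : m b = 0
      · rw [hb, pow_zero]; exact one_ne_zero
      · exact (pow_pos (hxpos m hm b hb) _).ne'
    have e1 : Real.log (y m) = Real.log (eval x P) + Real.log (∏ b, T b ^ m b)
        - Real.log (∏ b, x b ^ m b) := by
      simp only [hydef]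
      rw [Real.log_div (mul_pos hPxpos (hprodT m hm)).ne' (hprodx m hm).ne',
        Real.log_mul hPxpos.ne' (hprodT m hm).ne']
    rw [e1, Real.log_prod hTne, Real.log_prod hxne]
    simp only [Real.log_pow, hLdef]
    rw [add_sub_assoc, ← Finset.sum_sub_distrib]
    congr 1
    refine Finset.sum_congr rfl fun b _ => ?_
    ring
  have hAs : ∀ a, A a = ∑ m ∈ s, W m * (m a : ℝ) := by
    intro a
    rw [hA a, hsdef]
    exact (Finset.sum_filter_of_ne fun m hm h => left_ne_zero_of_mul h).symm
  have hmain_eq : ∑ m ∈ s, w m * Real.log (y m)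
      = Real.log (eval x P) + (∑ a, A a * L a) / eval x P := by
    have e1 : ∀ m ∈ s, w m * Real.log (y m)
        = w m * Real.log (eval x P) + ∑ b, w m * (m b : ℝ) * L b := by
      intro m hm
      rw [hlogy m hm, mul_add, Finset.mul_sum]
      congr 1
      exact Finset.sum_congr rfl fun b _ => (mul_assoc _ _ _).symm
    rw [Finset.sum_congr rfl e1, Finset.sum_add_distrib, ← Finset.sum_mul, hw1, one_mul,
      Finset.sum_comm]
    congr 1
    rw [Finset.sum_div]
    refine Finset.sum_congr rfl fun a _ => ?_
    rw [← Finset.sum_mul]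
    have : ∑ m ∈ s, w m * (m a : ℝ) = A a / eval x P := by
      simp only [hwdef]
      rw [hAs a, Finset.sum_div]
      exact Finset.sum_congr rfl fun m _ => by rw [div_mul_eq_mul_div]
    rw [this, div_mul_eq_mul_div]
  have hGroup : ∀ i, 0 ≤ ∑ j, A ⟨i, j⟩ * L ⟨i, j⟩ ∧
      ((∑ j, A ⟨i, j⟩ * L ⟨i, j⟩) = 0 → ∀ j, T ⟨i, j⟩ = x ⟨i, j⟩) := by
    intro i
    have hfact : ∀ j : Fin (n i), A ⟨i, j⟩ * L ⟨i, j⟩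
        = S i * (T ⟨i, j⟩ * (Real.log (T ⟨i, j⟩) - Real.log (x ⟨i, j⟩))) := by
      intro j
      have hSA : A ⟨i, j⟩ = S i * T ⟨i, j⟩ := by
        rw [hT ⟨i, j⟩, mul_comm, div_mul_cancel₀ _ (hS i).ne']
      rw [hSA, hLdef]
      ring
    have hrw : ∑ j, A ⟨i, j⟩ * L ⟨i, j⟩
        = S i * ∑ j, T ⟨i, j⟩ * (Real.log (T ⟨i, j⟩) - Real.log (x ⟨i, j⟩)) := by
      rw [Finset.sum_congr rfl fun j _ => hfact j, ← Finset.mul_sum]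
    have habs : ∀ j : Fin (n i), T ⟨i, j⟩ ≠ 0 → 0 < x ⟨i, j⟩ := by
      intro j hj
      refine hxA ⟨i, j⟩ fun hAz => hj ?_
      rw [hT ⟨i, j⟩, hAz, zero_div]
    obtain ⟨g1, g2⟩ := gibbs' (fun j => T ⟨i, j⟩) (fun j => x ⟨i, j⟩)
      (fun j => hT0 ⟨i, j⟩) (fun j => hx0 ⟨i, j⟩) (hTsum i) (hx1 i) habs
    constructor
    · rw [hrw]; exact mul_nonneg (hS i).le g1
    · intro hz
      rw [hrw] at hz
      have := (mul_eq_zero.mp hz).resolve_left (hS i).ne'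
      intro j
      exact congrFun (g2 this) j
  have hsigma : ∑ a : (Σ i : Fin k, Fin (n i)), A a * L a
      = ∑ i, ∑ j, A ⟨i, j⟩ * L ⟨i, j⟩ :=
    Finset.sum_sigma Finset.univ (fun _ => Finset.univ) (fun a => A a * L a)
  have hGibbsTotal : 0 ≤ ∑ a, A a * L a := by
    rw [hsigma]
    exact Finset.sum_nonneg fun i _ => (hGroup i).1
  have chain : Real.log (eval x P) + (∑ a, A a * L a) / eval x P ≤ Real.log (eval T P) := by
    rw [← hmain_eq]
    calc ∑ m ∈ s, w m * Real.log (y m) ≤ Real.log (∑ m ∈ s, w m * y m) := hJ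
    _ ≤ Real.log (eval T P) :=
      (Real.log_le_log_iff hsum_wy_pos hevalT_pos).mpr hle_evalT
  have hfirst : eval x P ≤ eval T P := by
    have h1 : Real.log (eval x P) ≤ Real.log (eval T P) := by
      have := div_nonneg hGibbsTotal hPxpos.le
      linarith
    exact (Real.log_le_log_iff hPxpos hevalT_pos).mp h1
  refine ⟨hfirst, fun heq => ?_⟩
  have h0 : (∑ a, A a * L a) = 0 := by
    have h1 : Real.log (eval T P) = Real.log (eval x P) := by rw [heq]
    have h2 : (∑ a, A a * L a) / eval x P ≤ 0 := by linarith
    have h3 : 0 ≤ (∑ a, A a * L a) / eval x P := div_nonneg hGibbsTotal hPxpos.le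
    have h4 : (∑ a, A a * L a) / eval x P = 0 := le_antisymm h2 h3
    exact (div_eq_zero_iff.mp h4).resolve_right hPxpos.ne'
  have hsplit : ∑ i, ∑ j, A ⟨i, j⟩ * L ⟨i, j⟩ = 0 := by
    rw [← hsigma]
    exact h0
  have hzero_each : ∀ i, (∑ j, A ⟨i, j⟩ * L ⟨i, j⟩) = 0 := by
    intro i
    exact (Finset.sum_eq_zero_iff_of_nonneg (fun i _ => (hGroup i).1)).mp hsplit i
      (Finset.mem_univ i)
  funext a
  obtain ⟨i, j⟩ := a
  exact (hGroup i).2 (hzero_each i) j
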